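/- (Generalized Mixed Discriminant Theorem.) Let A₁,…,Aₙ be d×d real symmetric matrices and let f(x) = det(I + x₁A₁ + ⋯ + xₙAₙ) ∈ ℝ[x₁,…,xₙ]. For any exponents k₁,…,kₙ ∈ {0,…,d} with k₁ + ⋯ + kₙ = k ≤ d, the coefficient of the monomial x₁^{k₁}x₂^{k₂}⋯xₙ^{kₙ} in f equals the generalized mixed discriminant Σ_φ det(M_φ), where the sum ranges over all functions φ : {1,…,d} → {0,1,…,n} with |φ⁻¹(i)| = kᵢ for each i = 1,…,n, and M_φ is the d×d matrix whose j-th row is the j-th row of A_{φ(j)} when φ(j) = i ≥ 1 and equals the j-th row of the identity matrix when φ(j) = 0. -/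

import Mathlib

open Matrix MvPolynomial Finset

private lemma prod_monomial_one' {ι σ R : Type*} [CommSemiring R] (s : Finset ι)
    (e : ι → σ →₀ ℕ) :
    ∏ j ∈ s, monomial (e j) (1:R) = monomial (∑ j ∈ s, e j) 1 := by
  classical
  induction s using Finset.induction with
  | empty => simp
  | insert _ _ h ih => rw [Finset.prod_insert h, Finset.sum_insert h, ih, monomial_mul, one_mul]

theorem coeff_det_eq_generalized_mixed_discriminant (n d : ℕ)
    (A : Fin n → Matrix (Fin d) (Fin d) ℝ) (hA : ∀ i, (A i).IsSymm)
    (k : Fin n → ℕ) (hk : ∀ i, k i ≤ d) (hsum : ∑ i, k i ≤ d) :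
    MvPolynomial.coeff (Finsupp.equivFunOnFinite.symm k)
      (Matrix.det ((1 : Matrix (Fin d) (Fin d) (MvPolynomial (Fin n) ℝ)) +
        ∑ i : Fin n, (MvPolynomial.X i : MvPolynomial (Fin n) ℝ) • (A i).map MvPolynomial.C)) =
    ∑ φ ∈ Finset.univ.filter
        (fun φ : Fin d → Option (Fin n) =>
          ∀ i : Fin n, (Finset.univ.filter (fun j : Fin d => φ j = some i)).card = k i),
      Matrix.det (Matrix.of fun j l : Fin d =>
        (φ j).elim ((1 : Matrix (Fin d) (Fin d) ℝ) j l) (fun i => A i j l)) := by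
  classical
  set target : Fin n →₀ ℕ := Finsupp.equivFunOnFinite.symm k with htarget
  set M : Matrix (Fin d) (Fin d) (MvPolynomial (Fin n) ℝ) :=
    (1 : Matrix (Fin d) (Fin d) (MvPolynomial (Fin n) ℝ)) +
      ∑ i : Fin n, (MvPolynomial.X i : MvPolynomial (Fin n) ℝ) • (A i).map MvPolynomial.C
    with hM
  set N : (Fin d → Option (Fin n)) → Matrix (Fin d) (Fin d) ℝ := fun φ =>
    Matrix.of fun j l : Fin d =>
      (φ j).elim ((1 : Matrix (Fin d) (Fin d) ℝ) j l) (fun i => A i j l) with hN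
  set valid : Finset (Fin d → Option (Fin n)) := Finset.univ.filter
      (fun φ : Fin d → Option (Fin n) =>
        ∀ i : Fin n, (Finset.univ.filter (fun j : Fin d => φ j = some i)).card = k i)
    with hvalid
  have hMentry : ∀ j l, M j l = ∑ o : Option (Fin n),
      o.elim (C ((1 : Matrix (Fin d) (Fin d) ℝ) j l)) (fun i => X i * C (A i j l)) := by
    intro j l
    simp [hM, Matrix.add_apply, Matrix.sum_apply, Matrix.one_apply, Fintype.sum_option,
      smul_eq_mul, apply_ite (C : ℝ → MvPolynomial (Fin n) ℝ), Matrix.map_apply]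
  -- the key per-permutation computation
  have key : ∀ σ : Equiv.Perm (Fin d),
      coeff target (∏ j, M (σ j) j) = ∑ φ ∈ valid, ∏ j, N φ (σ j) j := by
    intro σ
    have h1 : (∏ j, M (σ j) j) = ∑ φ : Fin d → Option (Fin n),
        ∏ j, (φ j).elim (C ((1 : Matrix (Fin d) (Fin d) ℝ) (σ j) j))
          (fun i => X i * C (A i (σ j) j)) := by
      simp_rw [hMentry]
      rw [Finset.prod_univ_sum]
      simp [Fintype.piFinset_univ]
    rw [h1]
    -- reindex φ ↦ φ ∘ σ⁻¹
    have h2 : (∑ φ : Fin d → Option (Fin n),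
        ∏ j, (φ j).elim (C ((1 : Matrix (Fin d) (Fin d) ℝ) (σ j) j))
          (fun i => X i * C (A i (σ j) j))) =
        ∑ φ : Fin d → Option (Fin n),
        ∏ j, (φ (σ j)).elim (C ((1 : Matrix (Fin d) (Fin d) ℝ) (σ j) j))
          (fun i => X i * C (A i (σ j) j)) := by
      apply Fintype.sum_bijective (fun φ : Fin d → Option (Fin n) => φ ∘ ⇑σ.symm)
        ⟨fun φ₁ φ₂ h => by funext j; simpa using congrFun h (σ j),
         fun ψ => ⟨ψ ∘ ⇑σ, by funext j; simp⟩⟩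
      intro φ
      apply Finset.prod_congr rfl
      intro j _
      simp
    rw [h2]
    have h3 : ∀ φ : Fin d → Option (Fin n),
        (∏ j, (φ (σ j)).elim (C ((1 : Matrix (Fin d) (Fin d) ℝ) (σ j) j))
          (fun i => X i * C (A i (σ j) j))) =
        C (∏ j, N φ (σ j) j) *
          monomial (∑ j, (φ j).elim 0 (fun i => Finsupp.single i 1)) (1:ℝ) := by
      intro φ
      have : ∀ j : Fin d, (φ (σ j)).elim (C ((1 : Matrix (Fin d) (Fin d) ℝ) (σ j) j))
          (fun i => X i * C (A i (σ j) j)) =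
          C (N φ (σ j) j) * monomial ((φ (σ j)).elim 0 (fun i => Finsupp.single i 1)) (1:ℝ) := by
        intro j
        cases hφ : φ (σ j) with
        | none => simp [hN, hφ]
        | some i => simp [hN, hφ, X, mul_comm]
      simp_rw [this]
      rw [Finset.prod_mul_distrib, ← map_prod, prod_monomial_one',
        Equiv.sum_comp σ fun j => (φ j).elim 0 (fun i => Finsupp.single i 1)]
    simp_rw [h3]
    rw [MvPolynomial.coeff_sum]
    have h4 : ∀ φ : Fin d → Option (Fin n),
        coeff target (C (∏ j, N φ (σ j) j) *
          monomial (∑ j, (φ j).elim 0 (fun i => Finsupp.single i 1)) (1:ℝ)) =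
        if φ ∈ valid then ∏ j, N φ (σ j) j else 0 := by
      intro φ
      rw [coeff_C_mul, coeff_monomial]
      have hcond : ((∑ j, (φ j).elim 0 (fun i => Finsupp.single i 1)) = target) ↔ φ ∈ valid := by
        rw [hvalid, Finset.mem_filter]
        simp only [Finset.mem_univ, true_and]
        rw [Finsupp.ext_iff]
        apply forall_congr'
        intro i
        have hl : (∑ j, (φ j).elim 0 (fun i' => Finsupp.single i' 1)) i =
            (Finset.univ.filter (fun j : Fin d => φ j = some i)).card := by
          rw [Finsupp.finset_sum_apply]
          rw [Finset.card_filter]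
          apply Finset.sum_congr rfl
          intro j _
          cases hφ : φ j with
          | none => simp [hφ]
          | some i' =>
            simp only [hφ, Option.elim, Finsupp.single_apply]
            by_cases h : i' = i
            · simp [h]
            · simp [h, Ne.symm h]
        have hr : target i = k i := by simp [htarget]
        rw [hl, hr]
      by_cases hφv : φ ∈ valid
      · rw [if_pos (hcond.mpr hφv), if_pos hφv, mul_one]
      · rw [if_neg (fun h => hφv (hcond.mp h)), if_neg hφv, mul_zero]
    simp_rw [h4]
    rw [Finset.sum_ite_mem, Finset.univ_inter]
  -- now assemble
  rw [Matrix.det_apply, MvPolynomial.coeff_sum]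
  simp_rw [MvPolynomial.coeff_smul, key, Finset.smul_sum]
  rw [Finset.sum_comm]
  apply Finset.sum_congr rfl
  intro φ _
  rw [Matrix.det_apply]
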